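/- Let L_1, …, L_N be n×n complex GPM Lindblad operators, L_α = P_{σ_α} · D_α, with associated weight matrix Ω, basins N_1, …, N_{n_B}, and N_B their union. Let ∼ be an equivalence relation on a subset N_∼ ⊆ N_B such that: (i) j ∼ k implies |D_{α,j}| = |D_{α,k}| for all α; and (ii) if j ∼ k and σ_α(j), σ_α(k) ∈ N_B, then σ_α(j), σ_α(k) ∈ N_∼ and σ_α(j) ∼ σ_α(k). Then reachability in the induced coherence graph G_∼ is symmetric: whenever there is a directed path in G_∼ from vertex (j₁,k₁) to vertex (j₂,k₂), there is also a directed path from (j₂,k₂) to (j₁,k₁). In particular the weakly connected components of G_∼ are strongly connected. -/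

import Mathlib

open scoped Classical

/-- The permutation matrix of `σ`: entry `(j,k)` is `1` iff `j = σ k`. -/
def permMat (n : ℕ) (σ : Equiv.Perm (Fin n)) : Matrix (Fin n) (Fin n) ℂ :=
  Matrix.of fun j k => if j = σ k then 1 else 0

/-- The weight matrix associated to Lindblad operators `L α`. -/
noncomputable def weightMat {n N : ℕ} (L : Fin N → Matrix (Fin n) (Fin n) ℂ) :
    Matrix (Fin n) (Fin n) ℝ :=
  Matrix.of fun j k =>
    if j = k then -∑ l ∈ Finset.univ.erase k, ∑ α, ‖L α l k‖ ^ 2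
    else ∑ α, ‖L α j k‖ ^ 2

/-- Edge of the digraph `G_Ω`: for `k ≠ j`, there is an edge from `k` to `j` iff `Ω j k ≠ 0`. -/
def edgeRel {n : ℕ} (Ω : Matrix (Fin n) (Fin n) ℝ) (k j : Fin n) : Prop :=
  k ≠ j ∧ Ω j k ≠ 0

/-- Reachability in `G_Ω`. -/
def reaches {n : ℕ} (Ω : Matrix (Fin n) (Fin n) ℝ) : Fin n → Fin n → Prop :=
  Relation.ReflTransGen (edgeRel Ω)

/-- `S` is a strongly connected component of `G_Ω`. -/
def IsSCC {n : ℕ} (Ω : Matrix (Fin n) (Fin n) ℝ) (S : Set (Fin n)) : Prop :=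
  S.Nonempty ∧ ∀ u ∈ S, ∀ v : Fin n, (v ∈ S ↔ (reaches Ω u v ∧ reaches Ω v u))

/-- A basin: a strongly connected component with no outgoing edges. -/
def IsBasin {n : ℕ} (Ω : Matrix (Fin n) (Fin n) ℝ) (S : Set (Fin n)) : Prop :=
  IsSCC Ω S ∧ ∀ j ∈ S, ∀ k : Fin n, k ∉ S → Ω k j = 0

/-- `N_B`: the union of all basins of `G_Ω`. -/
def basinUnion {n : ℕ} (Ω : Matrix (Fin n) (Fin n) ℝ) : Set (Fin n) :=
  {j | ∃ S : Set (Fin n), IsBasin Ω S ∧ j ∈ S}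

/-- Vertices of the induced coherence graph `G_∼`:
pairs `(j,k)` with `j,k ∈ N_∼`, `j ∼ k`, `j ≠ k`. -/
def cVert {n : ℕ} (Nsim : Set (Fin n)) (r : Fin n → Fin n → Prop)
    (x : Fin n × Fin n) : Prop :=
  x.1 ∈ Nsim ∧ x.2 ∈ Nsim ∧ r x.1 x.2 ∧ x.1 ≠ x.2

/-- Edges of the induced coherence graph `G_∼`: for some `α`,
`(j₁,k₁) →_α (σ_α j₁, σ_α k₁)` whenever `D_{α,j₁} ≠ 0` and `D_{α,k₁} ≠ 0`,
between vertices of `G_∼`. -/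
def cEdge {n N : ℕ} (σ : Fin N → Equiv.Perm (Fin n)) (d : Fin N → Fin n → ℂ)
    (Nsim : Set (Fin n)) (r : Fin n → Fin n → Prop) (x y : Fin n × Fin n) : Prop :=
  cVert Nsim r x ∧ cVert Nsim r y ∧
    ∃ α, σ α x.1 = y.1 ∧ σ α x.2 = y.2 ∧ d α x.1 ≠ 0 ∧ d α x.2 ≠ 0

lemma Lval {n N : ℕ} (σ : Fin N → Equiv.Perm (Fin n)) (d : Fin N → Fin n → ℂ)
    (L : Fin N → Matrix (Fin n) (Fin n) ℂ)
    (hL : ∀ α, L α = permMat n (σ α) * Matrix.diagonal (d α))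
    (α : Fin N) (j k : Fin n) :
    L α j k = if j = σ α k then d α k else 0 := by
  rw [hL, Matrix.mul_apply]
  simp [permMat, Matrix.diagonal, Matrix.of_apply, ite_and]

lemma omega_off {n N : ℕ} (L : Fin N → Matrix (Fin n) (Fin n) ℂ)
    {j k : Fin n} (h : j ≠ k) :
    weightMat L j k = ∑ α, ‖L α j k‖ ^ 2 := by
  simp [weightMat, h]

lemma omega_ne_of {n N : ℕ} (σ : Fin N → Equiv.Perm (Fin n)) (d : Fin N → Fin n → ℂ)
    (L : Fin N → Matrix (Fin n) (Fin n) ℂ)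
    (hL : ∀ α, L α = permMat n (σ α) * Matrix.diagonal (d α))
    {α : Fin N} {a : Fin n} (hd : d α a ≠ 0) (hne : σ α a ≠ a) :
    weightMat L (σ α a) a ≠ 0 := by
  rw [omega_off L hne]
  have hpos : (0:ℝ) < ∑ β, ‖L β (σ α a) a‖ ^ 2 := by
    apply Finset.sum_pos' (fun β _ => by positivity)
    refine ⟨α, Finset.mem_univ _, ?_⟩
    rw [Lval σ d L hL, if_pos rfl]
    have := norm_pos_iff.mpr hd
    positivity
  exact ne_of_gt hpos

lemma exists_of_omega {n N : ℕ} (σ : Fin N → Equiv.Perm (Fin n)) (d : Fin N → Fin n → ℂ)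
    (L : Fin N → Matrix (Fin n) (Fin n) ℂ)
    (hL : ∀ α, L α = permMat n (σ α) * Matrix.diagonal (d α))
    {a c : Fin n} (hne : c ≠ a) (h : weightMat L c a ≠ 0) :
    ∃ α, σ α a = c ∧ d α a ≠ 0 := by
  rw [omega_off L hne] at h
  obtain ⟨α, -, hα⟩ : ∃ α ∈ Finset.univ, ‖L α c a‖ ^ 2 ≠ 0 := by
    by_contra hc
    push_neg at hc
    exact h (Finset.sum_eq_zero fun β hβ => hc β hβ)
  rw [Lval σ d L hL] at hα
  by_cases hca : c = σ α a
  · subst hca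
    rw [if_pos rfl] at hα
    refine ⟨α, rfl, fun h0 => hα (by simp [h0])⟩
  · rw [if_neg hca] at hα; simp at hα

section Words
variable {n N : ℕ} (σ : Fin N → Equiv.Perm (Fin n)) (d : Fin N → Fin n → ℂ)

/-- A word is applicable at state `a` if `d` is nonzero along the orbit. -/
def Sok : List (Fin N) → Fin n → Prop
  | [], _ => True
  | α :: w, a => d α a ≠ 0 ∧ Sok w (σ α a)

/-- Endpoint of a word applied at a state. -/
def Sdest : List (Fin N) → Fin n → Fin n
  | [], a => a
  | α :: w, a => Sdest w (σ α a)

/-- The permutation of pairs induced by a word. -/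
def Pw : List (Fin N) → Equiv.Perm (Fin n × Fin n)
  | [] => 1
  | α :: w => (Pw w) * ((σ α).prodCongr (σ α))

lemma Pw_fst : ∀ (w : List (Fin N)) (x : Fin n × Fin n),
    (Pw σ w x).1 = Sdest σ w x.1
  | [], x => rfl
  | α :: w, x => by
    show (Pw σ w ((σ α).prodCongr (σ α) x)).1 = Sdest σ w (σ α x.1)
    rw [Pw_fst w]
    rfl
end Words

lemma word_of_reaches {n N : ℕ} (σ : Fin N → Equiv.Perm (Fin n)) (d : Fin N → Fin n → ℂ)
    (L : Fin N → Matrix (Fin n) (Fin n) ℂ)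
    (hL : ∀ α, L α = permMat n (σ α) * Matrix.diagonal (d α))
    {a b : Fin n} (h : reaches (weightMat L) a b) :
    ∃ w : List (Fin N), Sok σ d w a ∧ Sdest σ w a = b := by
  induction h using Relation.ReflTransGen.head_induction_on with
  | refl => exact ⟨[], trivial, rfl⟩
  | head he _ ih =>
    obtain ⟨w, hw, hdw⟩ := ih
    obtain ⟨α, hσ, hd⟩ := exists_of_omega σ d L hL (Ne.symm he.1) he.2
    refine ⟨α :: w, ⟨hd, ?_⟩, ?_⟩
    · rw [hσ]; exact hw
    · show Sdest σ w _ = b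
      rw [hσ]; exact hdw
theorem stmt12 (n N : ℕ) (σ : Fin N → Equiv.Perm (Fin n)) (d : Fin N → Fin n → ℂ)
    (L : Fin N → Matrix (Fin n) (Fin n) ℂ)
    (hL : ∀ α, L α = permMat n (σ α) * Matrix.diagonal (d α))
    (Nsim : Set (Fin n)) (hNsim : Nsim ⊆ basinUnion (weightMat L))
    (r : Fin n → Fin n → Prop)
    (hrefl : ∀ j ∈ Nsim, r j j)
    (hsymm : ∀ j k : Fin n, r j k → r k j)
    (htrans : ∀ i j k : Fin n, r i j → r j k → r i k)
    (hdom : ∀ j k : Fin n, r j k → j ∈ Nsim ∧ k ∈ Nsim)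
    (hmod : ∀ (α) (j k : Fin n), r j k → ‖d α j‖ = ‖d α k‖)
    (hperm : ∀ (α) (j k : Fin n), r j k →
      σ α j ∈ basinUnion (weightMat L) → σ α k ∈ basinUnion (weightMat L) →
      σ α j ∈ Nsim ∧ σ α k ∈ Nsim ∧ r (σ α j) (σ α k)) :
    ∀ x y : Fin n × Fin n, cVert Nsim r x → cVert Nsim r y →
      Relation.ReflTransGen (cEdge σ d Nsim r) x y →
      Relation.ReflTransGen (cEdge σ d Nsim r) y x := by
  -- d α is nonzero simultaneously on equivalent states
  have hDne : ∀ (α) (j k : Fin n), r j k → d α j ≠ 0 → d α k ≠ 0 := by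
    intro α j k hr hdj hk0
    have h1 := hmod α j k hr
    rw [hk0, norm_zero, norm_eq_zero] at h1
    exact hdj h1
  -- basin closure: applying σ α with nonzero d stays in the basin union and reaches back
  have hbasin : ∀ a ∈ basinUnion (weightMat L), ∀ (α), d α a ≠ 0 →
      σ α a ∈ basinUnion (weightMat L) ∧ reaches (weightMat L) (σ α a) a := by
    intro a ha α hd
    obtain ⟨S, hS, haS⟩ := ha
    have hmemS : σ α a ∈ S := by
      by_cases hea : σ α a = a
      · rwa [hea]
      · by_contra hns
        exact omega_ne_of σ d L hL hd hea (hS.2 a haS (σ α a) hns)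
    exact ⟨⟨S, hS, hmemS⟩, ((hS.1.2 (σ α a) hmemS a).mp haS).1⟩
  -- one step in the coherence graph
  have hedge : ∀ x, cVert Nsim r x → ∀ (α), d α x.1 ≠ 0 →
      cEdge σ d Nsim r x ((σ α).prodCongr (σ α) x) := by
    intro x hx α hd1
    obtain ⟨h1, h2, hr, hne⟩ := hx
    have hd2 : d α x.2 ≠ 0 := hDne α x.1 x.2 hr hd1
    have hb1 := (hbasin x.1 (hNsim h1) α hd1).1
    have hb2 := (hbasin x.2 (hNsim h2) α hd2).1
    obtain ⟨m1, m2, hr'⟩ := hperm α x.1 x.2 hr hb1 hb2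
    exact ⟨⟨h1, h2, hr, hne⟩,
      ⟨m1, m2, hr', fun h => hne ((σ α).injective h)⟩, α, rfl, rfl, hd1, hd2⟩
  -- word applicability transfers along the relation
  have hstate : ∀ (w : List (Fin N)) (a a' : Fin n), a ∈ Nsim → a' ∈ Nsim → r a a' →
      Sok σ d w a → Sok σ d w a' ∧ r (Sdest σ w a) (Sdest σ w a') := by
    intro w
    induction w with
    | nil => intro a a' _ _ hr _; exact ⟨trivial, hr⟩
    | cons α w ih =>
      intro a a' ha ha' hr hok
      obtain ⟨hd, hok⟩ := hok
      have hd' : d α a' ≠ 0 := hDne α a a' hr hd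
      have hb := (hbasin a (hNsim ha) α hd).1
      have hb' := (hbasin a' (hNsim ha') α hd').1
      obtain ⟨m1, m2, hr'⟩ := hperm α a a' hr hb hb'
      have := ih (σ α a) (σ α a') m1 m2 hr' hok
      exact ⟨⟨hd', this.1⟩, this.2⟩
  -- applying an applicable word yields a path in the coherence graph
  have hA : ∀ (w : List (Fin N)) (x : Fin n × Fin n), cVert Nsim r x → Sok σ d w x.1 →
      cVert Nsim r (Pw σ w x) ∧
        Relation.ReflTransGen (cEdge σ d Nsim r) x (Pw σ w x) := by
    intro w
    induction w with
    | nil => intro x hx _; exact ⟨hx, Relation.ReflTransGen.refl⟩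
    | cons α w ih =>
      intro x hx hok
      obtain ⟨hd, hok⟩ := hok
      have he := hedge x hx α hd
      have hy : cVert Nsim r ((σ α).prodCongr (σ α) x) := he.2.1
      have hr := ih ((σ α).prodCongr (σ α) x) hy hok
      exact ⟨hr.1, Relation.ReflTransGen.head he hr.2⟩
  -- reversal of a single edge
  have hrev : ∀ x y, cEdge σ d Nsim r x y →
      Relation.ReflTransGen (cEdge σ d Nsim r) y x := by
    intro x y hxy
    obtain ⟨hx, hy, α, e1, e2, hd1, hd2⟩ := hxy
    have hyx : y = (σ α x.1, σ α x.2) := by rw [e1, e2]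
    have hre : reaches (weightMat L) (σ α x.1) x.1 := (hbasin x.1 (hNsim hx.1) α hd1).2
    obtain ⟨w, hw, hdw⟩ := word_of_reaches σ d L hL hre
    set u : List (Fin N) := α :: w with hu
    have hoku : Sok σ d u x.1 := ⟨hd1, hw⟩
    have hdu : Sdest σ u x.1 = x.1 := hdw
    set e : Equiv.Perm (Fin n × Fin n) := Pw σ u with hedef
    have hinv : ∀ i : ℕ, cVert Nsim r ((e ^ i) x) ∧ r x.1 (((e ^ i) x).1) := by
      intro i
      induction i with
      | zero =>
        have h0 : (e ^ 0) x = x := by rw [pow_zero]; rfl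
        rw [h0]; exact ⟨hx, hrefl x.1 hx.1⟩
      | succ i ih =>
        obtain ⟨hv, hrv⟩ := ih
        have hmem := hdom _ _ hrv
        have hst := hstate u x.1 ((e ^ i) x).1 hx.1 hmem.2 hrv hoku
        have hAi := hA u ((e ^ i) x) hv hst.1
        have hstep : (e ^ (i + 1)) x = e ((e ^ i) x) := by rw [pow_succ']; rfl
        refine ⟨by rw [hstep]; exact hAi.1, ?_⟩
        rw [hstep]
        have hrr : r (Sdest σ u x.1) (Sdest σ u ((e ^ i) x).1) := hst.2
        rwa [hdu, ← Pw_fst σ u] at hrr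
    have hQ : ∀ i : ℕ, Relation.ReflTransGen (cEdge σ d Nsim r)
        ((e ^ i) x) ((e ^ (i + 1)) x) := by
      intro i
      obtain ⟨hv, hrv⟩ := hinv i
      have hmem := hdom _ _ hrv
      have hst := hstate u x.1 ((e ^ i) x).1 hx.1 hmem.2 hrv hoku
      have hAi := hA u ((e ^ i) x) hv hst.1
      have hstep : (e ^ (i + 1)) x = e ((e ^ i) x) := by rw [pow_succ']; rfl
      rw [hstep]; exact hAi.2
    have hchain : ∀ i : ℕ, Relation.ReflTransGen (cEdge σ d Nsim r)
        (e x) ((e ^ (i + 1)) x) := by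
      intro i
      induction i with
      | zero =>
        have h1 : (e ^ 1) x = e x := by rw [pow_one]
        rw [h1]
      | succ i ih => exact ih.trans (hQ (i + 1))
    have hm : 0 < orderOf e := orderOf_pos e
    have hord : (e ^ orderOf e) x = x := by rw [pow_orderOf_eq_one]; rfl
    have hback : Relation.ReflTransGen (cEdge σ d Nsim r) (e x) x := by
      have hc := hchain (orderOf e - 1)
      rwa [Nat.sub_add_cancel hm, hord] at hc
    have hfwd : Relation.ReflTransGen (cEdge σ d Nsim r) y (e x) := by
      have hoky : Sok σ d w y.1 := by rw [hyx]; exact hw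
      have hAy := hA w y hy hoky
      have hPy : Pw σ w y = e x := by rw [hyx]; rfl
      rw [hPy] at hAy
      exact hAy.2
    exact hfwd.trans hback
  intro x y _ _ h
  induction h with
  | refl => exact Relation.ReflTransGen.refl
  | tail _ hbc ih => exact (hrev _ _ hbc).trans (ih hbc.1)
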